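/- Let K be a field, V a K-vector space of dimension at most 2, Q a quadratic form on V, and x an element of the Clifford algebra of Q. Suppose x * reverse (involute x) = algebraMap d for some d : K with d ≠ 0. Then x is invertible with two-sided inverse d⁻¹ • reverse (involute x); that is, x * (d⁻¹ • reverse (involute x)) = 1 and (d⁻¹ • reverse (involute x)) * x = 1. (This is the paper's one- and two-dimensional inverse formula A⁻¹ = ⟦A⟧₁₂ / (A⟦A⟧₁₂).) -/

import Mathlib

open CliffordAlgebra

section Finiteness

variable {K V : Type*} [Field K] [AddCommGroup V] [Module K V]

/-- If `V` is spanned by two vectors, the Clifford algebra is spanned by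
`{1, e₁, e₂, e₁ * e₂}`, hence finite-dimensional. -/
theorem clifford_finite_of_span_two (Q : QuadraticForm K V) (v₁ v₂ : V)
    (hspan : Submodule.span K {v₁, v₂} = ⊤) :
    Module.Finite K (CliffordAlgebra Q) := by
  set e₁ : CliffordAlgebra Q := ι Q v₁ with he₁def
  set e₂ : CliffordAlgebra Q := ι Q v₂ with he₂def
  set s : Set (CliffordAlgebra Q) := {1, e₁, e₂, e₁ * e₂} with hsdef
  set S : Submodule K (CliffordAlgebra Q) := Submodule.span K s with hSdef
  have h1 : (1 : CliffordAlgebra Q) ∈ S := Submodule.subset_span (by left; rfl)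
  have he₁ : e₁ ∈ S := Submodule.subset_span (by right; left; rfl)
  have he₂ : e₂ ∈ S := Submodule.subset_span (by right; right; left; rfl)
  have hw : e₁ * e₂ ∈ S := Submodule.subset_span (by right; right; right; rfl)
  have sq1 : e₁ * e₁ = Q v₁ • (1 : CliffordAlgebra Q) := by
    rw [he₁def, ι_sq_scalar, Algebra.algebraMap_eq_smul_one]
  have sq2 : e₂ * e₂ = Q v₂ • (1 : CliffordAlgebra Q) := by
    rw [he₂def, ι_sq_scalar, Algebra.algebraMap_eq_smul_one]
  have comm : e₂ * e₁ =
      QuadraticMap.polar Q v₂ v₁ • (1 : CliffordAlgebra Q) - e₁ * e₂ := by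
    rw [he₁def, he₂def, ι_mul_ι_comm, Algebra.algebraMap_eq_smul_one]
  -- products of generators stay in S
  have key : ∀ a ∈ s, ∀ b ∈ s, a * b ∈ S := by
    rintro a (rfl | rfl | rfl | rfl) b (rfl | rfl | rfl | rfl)
    · rw [one_mul]; exact h1
    · rw [one_mul]; exact he₁
    · rw [one_mul]; exact he₂
    · rw [one_mul]; exact hw
    · rw [mul_one]; exact he₁
    · rw [sq1]; exact S.smul_mem _ h1
    · exact hw
    · rw [← mul_assoc, sq1, smul_mul_assoc, one_mul]; exact S.smul_mem _ he₂
    · rw [mul_one]; exact he₂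
    · rw [comm]; exact S.sub_mem (S.smul_mem _ h1) hw
    · rw [sq2]; exact S.smul_mem _ h1
    · rw [← mul_assoc, comm, sub_mul, smul_mul_assoc, one_mul, mul_assoc, sq2,
        mul_smul_comm, mul_one]
      exact S.sub_mem (S.smul_mem _ he₂) (S.smul_mem _ he₁)
    · rw [mul_one]; exact hw
    · rw [mul_assoc, comm, mul_sub, mul_smul_comm, mul_one, ← mul_assoc, sq1,
        smul_mul_assoc, one_mul]
      exact S.sub_mem (S.smul_mem _ he₁) (S.smul_mem _ he₂)
    · rw [mul_assoc, sq2, mul_smul_comm, mul_one]; exact S.smul_mem _ he₁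
    · rw [mul_assoc, ← mul_assoc e₂ e₁ e₂, comm, sub_mul, smul_mul_assoc, one_mul,
        mul_assoc e₁ e₂ e₂, sq2, mul_smul_comm, mul_one, mul_sub, mul_smul_comm,
        mul_smul_comm, sq1]
      exact S.sub_mem (S.smul_mem _ hw) (S.smul_mem _ (S.smul_mem _ h1))
  have hmul : ∀ a b : CliffordAlgebra Q, a ∈ S → b ∈ S → a * b ∈ S := by
    intro a b ha hb
    refine Submodule.span_induction (p := fun a _ => a * b ∈ S) ?_ ?_ ?_ ?_ ha
    · intro u hu
      refine Submodule.span_induction (p := fun b _ => u * b ∈ S) ?_ ?_ ?_ ?_ hb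
      · intro z hz; exact key u hu z hz
      · simp only [mul_zero]; exact S.zero_mem
      · intro y z _ _ hy hz; rw [mul_add]; exact S.add_mem hy hz
      · intro c y _ hy; rw [mul_smul_comm]; exact S.smul_mem c hy
    · simp only [zero_mul]; exact S.zero_mem
    · intro y z _ _ hy hz; rw [add_mul]; exact S.add_mem hy hz
    · intro c y _ hy; rw [smul_mul_assoc]; exact S.smul_mem c hy
  have htop : S = ⊤ := by
    rw [Submodule.eq_top_iff']
    intro a
    induction a using CliffordAlgebra.induction with
    | algebraMap r => rw [Algebra.algebraMap_eq_smul_one]; exact S.smul_mem r h1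
    | ι v =>
        have hv : v ∈ Submodule.span K {v₁, v₂} := hspan ▸ Submodule.mem_top
        refine Submodule.span_induction (p := fun v _ => ι Q v ∈ S) ?_ ?_ ?_ ?_ hv
        · rintro u (rfl | rfl); exacts [he₁, he₂]
        · simp only [map_zero]; exact S.zero_mem
        · intro y z _ _ hy hz; rw [map_add]; exact S.add_mem hy hz
        · intro c y _ hy; rw [map_smul]; exact S.smul_mem c hy
    | mul a b ha hb => exact hmul a b ha hb
    | add a b ha hb => exact S.add_mem ha hb
  have : (⊤ : Submodule K (CliffordAlgebra Q)).FG := Submodule.fg_def.mpr ⟨s, Set.toFinite s, htop⟩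
  exact Module.finite_def.mpr this

end Finiteness

/-- In dimension at most 2, if `x * reverse (involute x) = algebraMap d` with
`d ≠ 0`, then `d⁻¹ • reverse (involute x)` is a two-sided inverse of `x`:
the paper's inverse formula `A⁻¹ = ⟦A⟧₁₂ / (A ⟦A⟧₁₂)`. -/
theorem inv_dim_le_two (K V : Type*) [Field K] [AddCommGroup V] [Module K V]
    [FiniteDimensional K V] (hdim : Module.finrank K V ≤ 2)
    (Q : QuadraticForm K V) (x : CliffordAlgebra Q) (d : K) (hd : d ≠ 0)
    (hdet : x * reverse (involute x) = algebraMap K (CliffordAlgebra Q) d) :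
    x * (d⁻¹ • reverse (involute x)) = 1 ∧
      (d⁻¹ • reverse (involute x)) * x = 1 := by
  -- V is spanned by two vectors
  obtain ⟨v₁, v₂, hspan⟩ : ∃ v₁ v₂ : V, Submodule.span K {v₁, v₂} = ⊤ := by
    set n := Module.finrank K V with hn
    let b := Module.finBasis K V
    let f : Fin 2 → V := fun i => if h : (i : ℕ) < n then b ⟨i, h⟩ else 0
    refine ⟨f 0, f 1, ?_⟩
    rw [eq_top_iff, ← b.span_eq]
    refine Submodule.span_le.mpr ?_
    rintro - ⟨j, rfl⟩
    have hj2 : (j : ℕ) < 2 := lt_of_lt_of_le j.2 hdim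
    have hbj : b j = f ⟨j, hj2⟩ := by
      simp [f, j.2]; intro h; exact absurd j.2 (not_lt.mpr h)
    have h01 : (⟨(j : ℕ), hj2⟩ : Fin 2) = 0 ∨ (⟨(j : ℕ), hj2⟩ : Fin 2) = 1 := by
      have := hj2
      interval_cases h : (j : ℕ)
      · left; rfl
      · right; rfl
    rw [hbj]
    rcases h01 with h | h <;> rw [h] <;>
      exact Submodule.subset_span (by simp)
  haveI : Module.Finite K (CliffordAlgebra Q) := clifford_finite_of_span_two Q v₁ v₂ hspan
  set y := d⁻¹ • reverse (involute x) with hy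
  have h1 : x * y = 1 := by
    rw [hy, mul_smul_comm, hdet, Algebra.algebraMap_eq_smul_one, smul_smul,
      inv_mul_cancel₀ hd, one_smul]
  refine ⟨h1, ?_⟩
  -- left multiplication by y is injective, hence surjective
  have hinj : Function.Injective (LinearMap.mulLeft K y) := by
    intro a b hab
    have h2 : x * (y * a) = x * (y * b) := by
      simpa only [LinearMap.mulLeft_apply] using congrArg (x * ·) hab
    rwa [← mul_assoc, ← mul_assoc, h1, one_mul, one_mul] at h2
  have hsurj : Function.Surjective (LinearMap.mulLeft K y) :=
    (LinearMap.injective_iff_surjective).mp hinj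
  obtain ⟨z, hz⟩ := hsurj 1
  simp only [LinearMap.mulLeft_apply] at hz
  calc y * x = y * (x * (y * z)) := by rw [hz, mul_one]
  _ = y * ((x * y) * z) := by rw [mul_assoc]
  _ = y * z := by rw [h1, one_mul]
  _ = 1 := hz
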